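/- In the configuration M¹⁰(F₂), if a point p is the center (sum) of an X-quadrangle {a,b,c,d}, then p is the center of exactly three other X-quadrangles, obtained by pairing {a,b,c,d} into two pairs, taking the two blocks through the pairs, and replacing a,b,c,d by the remaining points of those two blocks other than their intersection point. -/

import Mathlib

/-- An `X`-quadrangle: four points of `X`, no three of which lie in a common block. -/
def IsXQuadrangle {V : Type*} (X : Finset V) (Bl : Set (Finset V)) (Q : Finset V) : Prop :=
  Q ⊆ X ∧ Q.card = 4 ∧ ∀ s ⊆ Q, s.card = 3 → ¬ ∃ b ∈ Bl, s ⊆ b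

section Aux

set_option linter.unusedSectionVars false

variable {V : Type*} [AddCommGroup V] [Module (ZMod 2) V] [DecidableEq V]

lemma char2_add_self (v : V) : v + v = 0 := by
  have : v + v = (1 + 1 : ZMod 2) • v := by rw [add_smul, one_smul]
  rw [this, show (1 + 1 : ZMod 2) = 0 from rfl, zero_smul]

lemma char2_eq_of_add_eq_zero {a b : V} (h : a + b = 0) : a = b := by
  have := char2_add_self b
  have h2 : a + b = b + b := by rw [h, this]
  exact add_right_cancel h2

lemma char2_sum_symmDiff (s t : Finset V) :
    (∑ v ∈ symmDiff s t, v) = (∑ v ∈ s, v) + (∑ v ∈ t, v) := by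
  have hd : Disjoint (s \ t) (t \ s) := disjoint_sdiff_sdiff
  have h1 : symmDiff s t = (s \ t) ∪ (t \ s) := by
    ext v; simp [Finset.mem_symmDiff, Finset.mem_union, Finset.mem_sdiff]
  have hs : (∑ v ∈ s \ t, v) + (∑ v ∈ s ∩ t, v) = ∑ v ∈ s, v := by
    rw [← Finset.sum_union (Finset.disjoint_sdiff_inter s t), Finset.sdiff_union_inter]
  have ht : (∑ v ∈ t \ s, v) + (∑ v ∈ t ∩ s, v) = ∑ v ∈ t, v := by
    rw [← Finset.sum_union (Finset.disjoint_sdiff_inter t s), Finset.sdiff_union_inter]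
  have hts : (t ∩ s) = (s ∩ t) := Finset.inter_comm t s
  rw [h1, Finset.sum_union hd, ← hs, ← ht, hts]
  abel_nf
  rw [show (2 : ℤ) • (∑ v ∈ s ∩ t, v) = (∑ v ∈ s ∩ t, v) + (∑ v ∈ s ∩ t, v) from two_zsmul _,
    char2_add_self]
  abel

variable {X : Finset V} {Bl : Set (Finset V)}

/-- Two blocks sharing two distinct points are equal. -/
lemma block_eq_block (hBl : ∀ b ∈ Bl, b ⊆ X ∧ b.card = 5 ∧ (∑ v ∈ b, v) = 0)
    (hpair : ∀ x ∈ X, ∀ y ∈ X, x ≠ y → ∃! b, b ∈ Bl ∧ x ∈ b ∧ y ∈ b)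
    {b c : Finset V} (hb : b ∈ Bl) (hc : c ∈ Bl) {x y : V} (hxy : x ≠ y)
    (hxb : x ∈ b) (hyb : y ∈ b) (hxc : x ∈ c) (hyc : y ∈ c) : b = c := by
  have hxX : x ∈ X := (hBl b hb).1 hxb
  have hyX : y ∈ X := (hBl b hb).1 hyb
  obtain ⟨l, -, hu⟩ := hpair x hxX y hyX hxy
  rw [hu b ⟨hb, hxb, hyb⟩, hu c ⟨hc, hxc, hyc⟩]

/-- Two distinct blocks meet in exactly one point. -/
lemma blocks_meet (hcard : X.card = 21)
    (hBl : ∀ b ∈ Bl, b ⊆ X ∧ b.card = 5 ∧ (∑ v ∈ b, v) = 0)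
    (hpair : ∀ x ∈ X, ∀ y ∈ X, x ≠ y → ∃! b, b ∈ Bl ∧ x ∈ b ∧ y ∈ b)
    {b₁ b₂ : Finset V} (h1 : b₁ ∈ Bl) (h2 : b₂ ∈ Bl) (hne : b₁ ≠ b₂) :
    ∃ z, b₁ ∩ b₂ = {z} := by
  by_cases hmeet : (b₁ ∩ b₂).Nonempty
  · obtain ⟨z, hz⟩ := hmeet
    refine ⟨z, ?_⟩
    apply Finset.eq_singleton_iff_unique_mem.2 ⟨hz, ?_⟩
    intro w hw
    by_contra hwz
    rw [Finset.mem_inter] at hz hw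
    exact hne (block_eq_block hBl hpair h1 h2 hwz hw.1 hz.1 hw.2 hz.2)
  · exfalso
    rw [Finset.not_nonempty_iff_eq_empty] at hmeet
    have hdisj : ∀ v, v ∈ b₁ → v ∈ b₂ → False := by
      intro v hv1 hv2
      have : v ∈ b₁ ∩ b₂ := Finset.mem_inter.2 ⟨hv1, hv2⟩
      simp [hmeet] at this
    obtain ⟨x, hx⟩ : b₂.Nonempty := by
      rw [← Finset.card_pos, (hBl b₂ h2).2.1]; norm_num
    have hxX : x ∈ X := (hBl b₂ h2).1 hx
    have key : ∀ y ∈ b₁, ∃ c, c ∈ Bl ∧ x ∈ c ∧ y ∈ c := by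
      intro y hy
      have hxy : x ≠ y := fun h => hdisj x (h ▸ hy) hx
      exact (hpair x hxX y ((hBl b₁ h1).1 hy) hxy).exists
    choose! f hf using key
    have hinj : Set.InjOn f b₁ := by
      intro y hy y' hy' hff
      by_contra hyy
      have h1' := hf y hy
      have h2' := hf y' hy'
      rw [hff] at h1'
      have : f y' = b₁ := block_eq_block hBl hpair h1'.1 h1 hyy h1'.2.2 h2'.2.2 hy hy'
      exact hdisj x (this ▸ h1'.2.1) hx
    set F : Finset (Finset V) := insert b₂ (b₁.image f) with hF
    have hb2notmem : b₂ ∉ b₁.image f := by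
      intro hmem
      obtain ⟨y, hy, hfy⟩ := Finset.mem_image.1 hmem
      exact hdisj y hy (hfy ▸ (hf y hy).2.2)
    have hFcard : F.card = 6 := by
      rw [hF, Finset.card_insert_of_notMem hb2notmem,
        Finset.card_image_of_injOn hinj, (hBl b₁ h1).2.1]
    have hFmem : ∀ c ∈ F, c ∈ Bl ∧ x ∈ c := by
      intro c hc
      rcases Finset.mem_insert.1 hc with h | h
      · exact h ▸ ⟨h2, hx⟩
      · obtain ⟨y, hy, hfy⟩ := Finset.mem_image.1 h
        exact hfy ▸ ⟨(hf y hy).1, (hf y hy).2.1⟩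
    have hdisjF : ∀ c ∈ F, ∀ c' ∈ F, c ≠ c' → Disjoint (c.erase x) (c'.erase x) := by
      intro c hc c' hc' hcc
      rw [Finset.disjoint_left]
      intro w hw hw'
      have hwx : w ≠ x := Finset.ne_of_mem_erase hw
      exact hcc (block_eq_block hBl hpair (hFmem c hc).1 (hFmem c' hc').1 hwx.symm
        (hFmem c hc).2 (Finset.mem_of_mem_erase hw) (hFmem c' hc').2
        (Finset.mem_of_mem_erase hw'))
    have hcard24 : (F.biUnion (fun c => c.erase x)).card = 24 := by
      rw [Finset.card_biUnion hdisjF]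
      have : ∀ c ∈ F, (c.erase x).card = 4 := by
        intro c hc
        rw [Finset.card_erase_of_mem (hFmem c hc).2, (hBl c (hFmem c hc).1).2.1]
      rw [Finset.sum_congr rfl this, Finset.sum_const, hFcard]; norm_num
    have hsub : F.biUnion (fun c => c.erase x) ⊆ X.erase x := by
      intro w hw
      obtain ⟨c, hc, hwc⟩ := Finset.mem_biUnion.1 hw
      exact Finset.mem_erase.2 ⟨Finset.ne_of_mem_erase hwc,
        (hBl c (hFmem c hc).1).1 (Finset.mem_of_mem_erase hwc)⟩
    have := Finset.card_le_card hsub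
    rw [hcard24, Finset.card_erase_of_mem hxX, hcard] at this
    omega

/-- Classification: any other quadrangle with the same center comes from two blocks. -/
lemma classify (hBl : ∀ b ∈ Bl, b ⊆ X ∧ b.card = 5 ∧ (∑ v ∈ b, v) = 0)
    (hpair : ∀ x ∈ X, ∀ y ∈ X, x ≠ y → ∃! b, b ∈ Bl ∧ x ∈ b ∧ y ∈ b)
    (hzerosum : ∀ S : Finset V, S ⊆ X → 1 ≤ S.card → S.card ≤ 8 →
        (∑ v ∈ S, v) = 0 →
        (∃ b ∈ Bl, S = b) ∨ ∃ b₁ ∈ Bl, ∃ b₂ ∈ Bl, b₁ ≠ b₂ ∧ S = symmDiff b₁ b₂)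
    {Q Q' : Finset V} (hQ : IsXQuadrangle X Bl Q) (hQ' : IsXQuadrangle X Bl Q')
    (hsum : (∑ v ∈ Q', v) = ∑ v ∈ Q, v) (hne : Q' ≠ Q) :
    ∃ b₁ ∈ Bl, ∃ b₂ ∈ Bl, b₁ ≠ b₂ ∧ Q ∩ Q' = ∅ ∧ Q ∪ Q' = symmDiff b₁ b₂ ∧
      (b₁ ∩ Q).card = 2 ∧ (b₂ ∩ Q).card = 2 ∧ Q' = symmDiff b₁ b₂ \ Q := by
  obtain ⟨hQX, hQ4, hQ3⟩ := hQ
  obtain ⟨hQ'X, hQ'4, hQ'3⟩ := hQ'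
  set S := symmDiff Q Q' with hS
  have hSX : S ⊆ X := by
    intro v hv
    rcases Finset.mem_symmDiff.1 hv with ⟨h, -⟩ | ⟨h, -⟩
    · exact hQX h
    · exact hQ'X h
  have hSsum : (∑ v ∈ S, v) = 0 := by
    rw [hS, char2_sum_symmDiff, hsum, char2_add_self]
  have hScard : S.card = (Q \ Q').card + (Q' \ Q).card := by
    have h1 : S = (Q \ Q') ∪ (Q' \ Q) := by
      ext v; simp [hS, Finset.mem_symmDiff, Finset.mem_union, Finset.mem_sdiff]
    rw [h1, Finset.card_union_of_disjoint disjoint_sdiff_sdiff]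
  have hk1 : (Q \ Q').card + (Q ∩ Q').card = 4 := by
    rw [Finset.card_sdiff_add_card_inter, hQ4]
  have hk2 : (Q' \ Q).card + (Q ∩ Q').card = 4 := by
    rw [Finset.inter_comm, Finset.card_sdiff_add_card_inter, hQ'4]
  have hSnonempty : 1 ≤ S.card := by
    rw [Nat.one_le_iff_ne_zero]
    intro h0
    apply hne
    have : S = ∅ := Finset.card_eq_zero.1 h0
    have := symmDiff_eq_bot.1 (by simpa [hS] using this)
    exact this.symm
  have hS8 : S.card ≤ 8 := by
    have := Finset.card_le_card (Finset.sdiff_subset : Q \ Q' ⊆ Q)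
    have := Finset.card_le_card (Finset.sdiff_subset : Q' \ Q ⊆ Q')
    omega
  rcases hzerosum S hSX hSnonempty hS8 hSsum with ⟨b, hb, hSb⟩ | ⟨b₁, hb₁, b₂, hb₂, hb12, hSbb⟩
  · exfalso
    have : S.card = 5 := by rw [hSb, (hBl b hb).2.1]
    omega
  · -- S = symmDiff b₁ b₂
    have hj : (b₁ ∩ b₂).card ≤ 1 := by
      by_contra h
      push_neg at h
      obtain ⟨z, hz, w, hw, hzw⟩ := Finset.one_lt_card.1 h
      rw [Finset.mem_inter] at hz hw
      exact hb12 (block_eq_block hBl hpair hb₁ hb₂ hzw hz.1 hw.1 hz.2 hw.2)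
    have hbb1 : (b₁ \ b₂).card + (b₁ ∩ b₂).card = 5 := by
      rw [Finset.card_sdiff_add_card_inter, (hBl b₁ hb₁).2.1]
    have hbb2 : (b₂ \ b₁).card + (b₁ ∩ b₂).card = 5 := by
      rw [Finset.inter_comm, Finset.card_sdiff_add_card_inter, (hBl b₂ hb₂).2.1]
    have hSbbcard : S.card = (b₁ \ b₂).card + (b₂ \ b₁).card := by
      have h1 : S = (b₁ \ b₂) ∪ (b₂ \ b₁) := by
        ext v; simp [hSbb, Finset.mem_symmDiff, Finset.mem_union, Finset.mem_sdiff]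
      rw [h1, Finset.card_union_of_disjoint disjoint_sdiff_sdiff]
    have hj1 : (b₁ ∩ b₂).card = 1 := by omega
    have hkk : (Q ∩ Q').card = 0 := by omega
    have hQQdisj : Q ∩ Q' = ∅ := Finset.card_eq_zero.1 hkk
    have hQQS : Q ∪ Q' = S := by
      ext v
      simp only [Finset.mem_union, hS, Finset.mem_symmDiff]
      constructor
      · rintro (h | h)
        · by_cases h' : v ∈ Q'
          · exfalso
            have : v ∈ Q ∩ Q' := Finset.mem_inter.2 ⟨h, h'⟩
            simp [hQQdisj] at this
          · exact Or.inl ⟨h, h'⟩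
        · by_cases h' : v ∈ Q
          · exfalso
            have : v ∈ Q ∩ Q' := Finset.mem_inter.2 ⟨h', h⟩
            simp [hQQdisj] at this
          · exact Or.inr ⟨h, h'⟩
      · rintro (⟨h, -⟩ | ⟨h, -⟩)
        · exact Or.inl h
        · exact Or.inr h
    obtain ⟨z, hz⟩ := Finset.card_eq_one.1 hj1
    have hcard_inter : ∀ b b' : Finset V, b ∈ Bl → b' ∈ Bl → b ∩ b' = {z} →
        S = symmDiff b b' → (b ∩ Q).card = 2 := by
      intro b b' hb hb' hzb hSb
      have hbQ' : b ∩ S = b \ b' := by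
        ext v
        simp only [Finset.mem_inter, Finset.mem_sdiff, hSb, Finset.mem_symmDiff]
        constructor
        · rintro ⟨h1, ⟨h2, h3⟩ | ⟨h2, h3⟩⟩
          · exact ⟨h1, h3⟩
          · exact absurd h1 h3
        · rintro ⟨h1, h2⟩
          exact ⟨h1, Or.inl ⟨h1, h2⟩⟩
      have hcard4 : (b ∩ S).card = 4 := by
        rw [hbQ']
        have : (b \ b').card + (b ∩ b').card = 5 := by
          rw [Finset.card_sdiff_add_card_inter, (hBl b hb).2.1]
        rw [hzb] at this
        simp at this
        omega
      have hsplit : (b ∩ Q) ∪ (b ∩ Q') = b ∩ S := by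
        rw [← hQQS, Finset.inter_union_distrib_left]
      have hdisj2 : Disjoint (b ∩ Q) (b ∩ Q') := by
        rw [Finset.disjoint_left]
        intro v hv hv'
        have : v ∈ Q ∩ Q' :=
          Finset.mem_inter.2 ⟨(Finset.mem_inter.1 hv).2, (Finset.mem_inter.1 hv').2⟩
        simp [hQQdisj] at this
      have hsum4 : (b ∩ Q).card + (b ∩ Q').card = 4 := by
        rw [← Finset.card_union_of_disjoint hdisj2, hsplit, hcard4]
      have hle1 : (b ∩ Q).card ≤ 2 := by
        by_contra h
        push_neg at h
        obtain ⟨t, ht, ht3⟩ := Finset.exists_subset_card_eq (show 3 ≤ (b ∩ Q).card from h)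
        exact hQ3 t (ht.trans Finset.inter_subset_right) ht3
          ⟨b, hb, ht.trans Finset.inter_subset_left⟩
      have hle2 : (b ∩ Q').card ≤ 2 := by
        by_contra h
        push_neg at h
        obtain ⟨t, ht, ht3⟩ := Finset.exists_subset_card_eq (show 3 ≤ (b ∩ Q').card from h)
        exact hQ'3 t (ht.trans Finset.inter_subset_right) ht3
          ⟨b, hb, ht.trans Finset.inter_subset_left⟩
      omega
    refine ⟨b₁, hb₁, b₂, hb₂, hb12, hQQdisj, hQQS.trans hSbb, ?_, ?_, ?_⟩
    · exact hcard_inter b₁ b₂ hb₁ hb₂ hz hSbb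
    · refine hcard_inter b₂ b₁ hb₂ hb₁ ?_ ?_
      · rw [Finset.inter_comm]; exact hz
      · rw [hSbb, symmDiff_comm]
    · have : Q' = (Q ∪ Q') \ Q := by
        rw [Finset.union_sdiff_cancel_left]
        rw [Finset.disjoint_left]
        intro v hv hv'
        have : v ∈ Q ∩ Q' := Finset.mem_inter.2 ⟨hv, hv'⟩
        simp [hQQdisj] at this
      rw [this, hQQS, hSbb]

/-- Construction: the quadrangle obtained from a pairing of `Q`. -/
lemma construct (hcard : X.card = 21)
    (hBl : ∀ b ∈ Bl, b ⊆ X ∧ b.card = 5 ∧ (∑ v ∈ b, v) = 0)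
    (hpair : ∀ x ∈ X, ∀ y ∈ X, x ≠ y → ∃! b, b ∈ Bl ∧ x ∈ b ∧ y ∈ b)
    {Q : Finset V} (hQ : IsXQuadrangle X Bl Q)
    {x y u w : V} (hxy : x ≠ y) (hxu : x ≠ u) (hxw : x ≠ w) (hyu : y ≠ u)
    (hyw : y ≠ w) (huw : u ≠ w) (hQeq : Q = {x, y, u, w})
    {b₁ b₂ : Finset V} (hb₁ : b₁ ∈ Bl) (hb₂ : b₂ ∈ Bl)
    (hxb : x ∈ b₁) (hyb : y ∈ b₁) (hub : u ∈ b₂) (hwb : w ∈ b₂) :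
    IsXQuadrangle X Bl (symmDiff b₁ b₂ \ Q) ∧
      (∑ v ∈ symmDiff b₁ b₂ \ Q, v) = (∑ v ∈ Q, v) ∧
      symmDiff b₁ b₂ \ Q ≠ Q ∧ b₁ ∩ Q = {x, y} ∧ b₂ ∩ Q = {u, w} ∧
      Q ⊆ symmDiff b₁ b₂ := by
  obtain ⟨hQX, hQ4, hQ3⟩ := hQ
  have hxQ : x ∈ Q := by simp [hQeq]
  have hyQ : y ∈ Q := by simp [hQeq]
  have huQ : u ∈ Q := by simp [hQeq]
  have hwQ : w ∈ Q := by simp [hQeq]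
  have hQ3' : ∀ p q r : V, p ∈ Q → q ∈ Q → r ∈ Q → p ≠ q → p ≠ r → q ≠ r →
      ∀ b ∈ Bl, p ∈ b → q ∈ b → r ∈ b → False := by
    intro p q r hp hq hr hpq hpr hqr b hb hpb hqb hrb
    apply hQ3 {p, q, r} ?_ ?_ ⟨b, hb, ?_⟩
    · intro v hv
      rcases Finset.mem_insert.1 hv with h | h
      · exact h ▸ hp
      rcases Finset.mem_insert.1 h with h' | h'
      · exact h' ▸ hq
      · exact (Finset.mem_singleton.1 h') ▸ hr
    · exact Finset.card_eq_three.2 ⟨p, q, r, hpq, hpr, hqr, rfl⟩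
    · intro v hv
      rcases Finset.mem_insert.1 hv with h | h
      · exact h ▸ hpb
      rcases Finset.mem_insert.1 h with h' | h'
      · exact h' ▸ hqb
      · exact (Finset.mem_singleton.1 h') ▸ hrb
  have hb12 : b₁ ≠ b₂ := by
    intro h
    exact hQ3' x y u hxQ hyQ huQ hxy hxu hyu b₁ hb₁ hxb hyb (h ▸ hub)
  have hb₁Q : b₁ ∩ Q = {x, y} := by
    apply Finset.Subset.antisymm
    · intro v hv
      obtain ⟨hvb, hvQ⟩ := Finset.mem_inter.1 hv
      simp only [hQeq, Finset.mem_insert, Finset.mem_singleton] at hvQ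
      rcases hvQ with h | h | h | h
      · simp [h]
      · simp [h]
      · exact (hQ3' x y u hxQ hyQ huQ hxy hxu hyu b₁ hb₁ hxb hyb (h ▸ hvb)).elim
      · exact (hQ3' x y w hxQ hyQ hwQ hxy hxw hyw b₁ hb₁ hxb hyb (h ▸ hvb)).elim
    · intro v hv
      rcases Finset.mem_insert.1 hv with h | h
      · exact h ▸ Finset.mem_inter.2 ⟨hxb, hxQ⟩
      · exact (Finset.mem_singleton.1 h) ▸ Finset.mem_inter.2 ⟨hyb, hyQ⟩
  have hb₂Q : b₂ ∩ Q = {u, w} := by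
    apply Finset.Subset.antisymm
    · intro v hv
      obtain ⟨hvb, hvQ⟩ := Finset.mem_inter.1 hv
      simp only [hQeq, Finset.mem_insert, Finset.mem_singleton] at hvQ
      rcases hvQ with h | h | h | h
      · exact (hQ3' x u w hxQ huQ hwQ hxu hxw huw b₂ hb₂ (h ▸ hvb) hub hwb).elim
      · exact (hQ3' y u w hyQ huQ hwQ hyu hyw huw b₂ hb₂ (h ▸ hvb) hub hwb).elim
      · simp [h]
      · simp [h]
    · intro v hv
      rcases Finset.mem_insert.1 hv with h | h
      · exact h ▸ Finset.mem_inter.2 ⟨hub, huQ⟩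
      · exact (Finset.mem_singleton.1 h) ▸ Finset.mem_inter.2 ⟨hwb, hwQ⟩
  obtain ⟨z, hz⟩ := blocks_meet hcard hBl hpair hb₁ hb₂ hb12
  have hzQ : z ∉ Q := by
    intro hzQ'
    have hz1 : z ∈ b₁ ∩ b₂ := by rw [hz]; exact Finset.mem_singleton_self z
    obtain ⟨hz1', hz2'⟩ := Finset.mem_inter.1 hz1
    have h1 : z ∈ ({x, y} : Finset V) := hb₁Q ▸ Finset.mem_inter.2 ⟨hz1', hzQ'⟩
    have h2 : z ∈ ({u, w} : Finset V) := hb₂Q ▸ Finset.mem_inter.2 ⟨hz2', hzQ'⟩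
    simp only [Finset.mem_insert, Finset.mem_singleton] at h1 h2
    rcases h1 with h1 | h1 <;> rcases h2 with h2 | h2
    · exact hxu (h1 ▸ h2 ▸ rfl)
    · exact hxw (h1 ▸ h2 ▸ rfl)
    · exact hyu (h1 ▸ h2 ▸ rfl)
    · exact hyw (h1 ▸ h2 ▸ rfl)
  have hxb2 : x ∉ b₂ := by
    intro h
    have : x ∈ ({u, w} : Finset V) := hb₂Q ▸ Finset.mem_inter.2 ⟨h, hxQ⟩
    simp only [Finset.mem_insert, Finset.mem_singleton] at this
    rcases this with h' | h' <;> [exact hxu h'; exact hxw h']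
  have hyb2 : y ∉ b₂ := by
    intro h
    have : y ∈ ({u, w} : Finset V) := hb₂Q ▸ Finset.mem_inter.2 ⟨h, hyQ⟩
    simp only [Finset.mem_insert, Finset.mem_singleton] at this
    rcases this with h' | h' <;> [exact hyu h'; exact hyw h']
  have hub1 : u ∉ b₁ := by
    intro h
    have : u ∈ ({x, y} : Finset V) := hb₁Q ▸ Finset.mem_inter.2 ⟨h, huQ⟩
    simp only [Finset.mem_insert, Finset.mem_singleton] at this
    rcases this with h' | h' <;> [exact hxu h'.symm; exact hyu h'.symm]
  have hwb1 : w ∉ b₁ := by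
    intro h
    have : w ∈ ({x, y} : Finset V) := hb₁Q ▸ Finset.mem_inter.2 ⟨h, hwQ⟩
    simp only [Finset.mem_insert, Finset.mem_singleton] at this
    rcases this with h' | h' <;> [exact hxw h'.symm; exact hyw h'.symm]
  have hQsub : Q ⊆ symmDiff b₁ b₂ := by
    intro v hv
    rw [Finset.mem_symmDiff]
    simp only [hQeq, Finset.mem_insert, Finset.mem_singleton] at hv
    rcases hv with h | h | h | h
    · exact Or.inl ⟨h ▸ hxb, h ▸ hxb2⟩
    · exact Or.inl ⟨h ▸ hyb, h ▸ hyb2⟩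
    · exact Or.inr ⟨h ▸ hub, h ▸ hub1⟩
    · exact Or.inr ⟨h ▸ hwb, h ▸ hwb1⟩
  have hzb1 : z ∈ b₁ := (Finset.mem_inter.1 (hz ▸ Finset.mem_singleton_self z : z ∈ b₁ ∩ b₂)).1
  have hzb2 : z ∈ b₂ := (Finset.mem_inter.1 (hz ▸ Finset.mem_singleton_self z : z ∈ b₁ ∩ b₂)).2
  have hcard_sd : (symmDiff b₁ b₂).card = 8 := by
    have h1 : (b₁ \ b₂).card + (b₁ ∩ b₂).card = 5 := by
      rw [Finset.card_sdiff_add_card_inter, (hBl b₁ hb₁).2.1]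
    have h2 : (b₂ \ b₁).card + (b₁ ∩ b₂).card = 5 := by
      rw [Finset.inter_comm, Finset.card_sdiff_add_card_inter, (hBl b₂ hb₂).2.1]
    have hz1 : (b₁ ∩ b₂).card = 1 := by rw [hz]; simp
    have h3 : symmDiff b₁ b₂ = (b₁ \ b₂) ∪ (b₂ \ b₁) := by
      ext v; simp [Finset.mem_symmDiff, Finset.mem_union, Finset.mem_sdiff]
    rw [h3, Finset.card_union_of_disjoint disjoint_sdiff_sdiff]
    omega
  set Q' := symmDiff b₁ b₂ \ Q with hQ'def
  have hQ'card : Q'.card = 4 := by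
    rw [hQ'def, Finset.card_sdiff_of_subset hQsub, hcard_sd, hQ4]
  have hQ'X : Q' ⊆ X := by
    intro v hv
    obtain ⟨hv1, -⟩ := Finset.mem_sdiff.1 hv
    rcases Finset.mem_symmDiff.1 hv1 with ⟨h, -⟩ | ⟨h, -⟩
    · exact (hBl b₁ hb₁).1 h
    · exact (hBl b₂ hb₂).1 h
  have hsum0 : (∑ v ∈ symmDiff b₁ b₂, v) = 0 := by
    rw [char2_sum_symmDiff, (hBl b₁ hb₁).2.2, (hBl b₂ hb₂).2.2, add_zero]
  have hQ'sum : (∑ v ∈ Q', v) = ∑ v ∈ Q, v := by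
    apply char2_eq_of_add_eq_zero
    rw [← Finset.sum_sdiff hQsub] at hsum0
    exact hsum0
  have hQ'ne : Q' ≠ Q := by
    intro h
    have : x ∈ Q' := h ▸ hxQ
    exact (Finset.mem_sdiff.1 this).2 hxQ
  -- Q' ∩ b₁ has two elements
  have hb₁Q' : (b₁ ∩ Q').card = 2 := by
    have he : b₁ ∩ Q' = (b₁ \ b₂) \ Q := by
      ext v
      simp only [hQ'def, Finset.mem_inter, Finset.mem_sdiff, Finset.mem_symmDiff]
      constructor
      · rintro ⟨h1, ⟨h2, h3⟩ | ⟨h2, h3⟩, h4⟩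
        · exact ⟨⟨h1, h3⟩, h4⟩
        · exact absurd h1 h3
      · rintro ⟨⟨h1, h2⟩, h3⟩
        exact ⟨h1, Or.inl ⟨h1, h2⟩, h3⟩
    have hinter : (b₁ \ b₂) ∩ Q = {x, y} := by
      ext v
      simp only [Finset.mem_inter, Finset.mem_sdiff]
      constructor
      · rintro ⟨⟨h1, h2⟩, h3⟩
        have : v ∈ b₁ ∩ Q := Finset.mem_inter.2 ⟨h1, h3⟩
        rw [hb₁Q] at this
        exact this
      · intro hv
        rcases Finset.mem_insert.1 hv with h | h
        · exact h ▸ ⟨⟨hxb, hxb2⟩, hxQ⟩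
        · exact (Finset.mem_singleton.1 h) ▸ ⟨⟨hyb, hyb2⟩, hyQ⟩
    have h1 : (b₁ \ b₂).card = 4 := by
      have h1' : (b₁ \ b₂).card + (b₁ ∩ b₂).card = 5 := by
        rw [Finset.card_sdiff_add_card_inter, (hBl b₁ hb₁).2.1]
      have hz1 : (b₁ ∩ b₂).card = 1 := by rw [hz]; simp
      omega
    have h2 : ((b₁ \ b₂) \ Q).card + ((b₁ \ b₂) ∩ Q).card = 4 := by
      rw [Finset.card_sdiff_add_card_inter, h1]
    rw [he]
    rw [hinter] at h2
    have : ({x, y} : Finset V).card = 2 := by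
      rw [Finset.card_insert_of_notMem (by simp [hxy]), Finset.card_singleton]
    omega
  have hb₂Q' : (b₂ ∩ Q').card = 2 := by
    have he : b₂ ∩ Q' = (b₂ \ b₁) \ Q := by
      ext v
      simp only [hQ'def, Finset.mem_inter, Finset.mem_sdiff, Finset.mem_symmDiff]
      constructor
      · rintro ⟨h1, ⟨h2, h3⟩ | ⟨h2, h3⟩, h4⟩
        · exact absurd h1 h3
        · exact ⟨⟨h1, h3⟩, h4⟩
      · rintro ⟨⟨h1, h2⟩, h3⟩
        exact ⟨h1, Or.inr ⟨h1, h2⟩, h3⟩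
    have hinter : (b₂ \ b₁) ∩ Q = {u, w} := by
      ext v
      simp only [Finset.mem_inter, Finset.mem_sdiff]
      constructor
      · rintro ⟨⟨h1, h2⟩, h3⟩
        have : v ∈ b₂ ∩ Q := Finset.mem_inter.2 ⟨h1, h3⟩
        rw [hb₂Q] at this
        exact this
      · intro hv
        rcases Finset.mem_insert.1 hv with h | h
        · exact h ▸ ⟨⟨hub, hub1⟩, huQ⟩
        · exact (Finset.mem_singleton.1 h) ▸ ⟨⟨hwb, hwb1⟩, hwQ⟩
    have h1 : (b₂ \ b₁).card = 4 := by
      have h1' : (b₂ \ b₁).card + (b₁ ∩ b₂).card = 5 := by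
        rw [Finset.inter_comm, Finset.card_sdiff_add_card_inter, (hBl b₂ hb₂).2.1]
      have hz1 : (b₁ ∩ b₂).card = 1 := by rw [hz]; simp
      omega
    have h2 : ((b₂ \ b₁) \ Q).card + ((b₂ \ b₁) ∩ Q).card = 4 := by
      rw [Finset.card_sdiff_add_card_inter, h1]
    rw [he]
    rw [hinter] at h2
    have : ({u, w} : Finset V).card = 2 := by
      rw [Finset.card_insert_of_notMem (by simp [huw]), Finset.card_singleton]
    omega
  have hQ'quad : IsXQuadrangle X Bl Q' := by
    refine ⟨hQ'X, hQ'card, ?_⟩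
    rintro s hs hs3 ⟨c, hc, hsc⟩
    have hsb : ∀ v ∈ s, v ∈ b₁ ∨ v ∈ b₂ := by
      intro v hv
      have := (Finset.mem_sdiff.1 (hs hv)).1
      rcases Finset.mem_symmDiff.1 this with ⟨h, -⟩ | ⟨h, -⟩
      · exact Or.inl h
      · exact Or.inr h
    have hzQ' : z ∉ Q' := by
      intro h
      have := (Finset.mem_sdiff.1 h).1
      rcases Finset.mem_symmDiff.1 this with ⟨-, h2⟩ | ⟨-, h2⟩
      · exact h2 hzb2
      · exact h2 hzb1
    have hinter_empty : s ∩ b₁ ∩ b₂ = ∅ := by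
      rw [Finset.eq_empty_iff_forall_notMem]
      intro v hv
      simp only [Finset.mem_inter] at hv
      have : v ∈ b₁ ∩ b₂ := Finset.mem_inter.2 ⟨hv.1.2, hv.2⟩
      rw [hz, Finset.mem_singleton] at this
      exact hzQ' (this ▸ hs hv.1.1)
    have hsplit : (s ∩ b₁).card + (s ∩ b₂).card = 3 := by
      have hu : (s ∩ b₁) ∪ (s ∩ b₂) = s := by
        rw [← Finset.inter_union_distrib_left]
        apply Finset.inter_eq_left.2
        intro v hv
        exact Finset.mem_union.2 (hsb v hv)
      have hi : (s ∩ b₁) ∩ (s ∩ b₂) = ∅ := by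
        rw [Finset.eq_empty_iff_forall_notMem]
        intro v hv
        simp only [Finset.mem_inter] at hv
        have : v ∈ s ∩ b₁ ∩ b₂ := by
          simp only [Finset.mem_inter]
          exact ⟨⟨hv.1.1, hv.1.2⟩, hv.2.2⟩
        simp [hinter_empty] at this
      have := Finset.card_union_add_card_inter (s ∩ b₁) (s ∩ b₂)
      rw [hu, hi, hs3] at this
      simpa using this.symm
    have key : ∀ b : Finset V, b ∈ Bl → (b ∩ Q').card = 2 → 2 ≤ (s ∩ b).card → False := by
      intro b hb hbQ'2 h2
      obtain ⟨p, hp, q, hq, hpq⟩ := Finset.one_lt_card.1 h2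
      rw [Finset.mem_inter] at hp hq
      have hcb : c = b := block_eq_block hBl hpair hc hb hpq (hsc hp.1) (hsc hq.1) hp.2 hq.2
      have hsub' : s ⊆ b ∩ Q' := by
        intro v hv
        exact Finset.mem_inter.2 ⟨hcb ▸ hsc hv, hs hv⟩
      have := Finset.card_le_card hsub'
      rw [hs3, hbQ'2] at this
      omega
    rcases Nat.lt_or_ge (s ∩ b₁).card 2 with h | h
    · have h2 : 2 ≤ (s ∩ b₂).card := by omega
      exact key b₂ hb₂ hb₂Q' h2
    · exact key b₁ hb₁ hb₁Q' h
  exact ⟨hQ'quad, hQ'sum, hQ'ne, hb₁Q, hb₂Q, hQsub⟩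

/-- Identify: in the classification, the two blocks are determined by the pairing. -/
lemma identify (hBl : ∀ b ∈ Bl, b ⊆ X ∧ b.card = 5 ∧ (∑ v ∈ b, v) = 0)
    (hpair : ∀ x ∈ X, ∀ y ∈ X, x ≠ y → ∃! b, b ∈ Bl ∧ x ∈ b ∧ y ∈ b)
    {Q Q' b₁ b₂ : Finset V} (hb₁ : b₁ ∈ Bl) (hb₂ : b₂ ∈ Bl)
    (hQQ' : Q ∪ Q' = symmDiff b₁ b₂) (h1 : (b₁ ∩ Q).card = 2) (h2 : (b₂ ∩ Q).card = 2)
    (hQ'eq : Q' = symmDiff b₁ b₂ \ Q)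
    {p q r s : V} (hpq : p ≠ q) (hpr : p ≠ r) (hps : p ≠ s) (hqr : q ≠ r)
    (hqs : q ≠ s) (hrs : r ≠ s) (hQeq : Q = {p, q, r, s})
    (hp : p ∈ b₁) (hq : q ∈ b₁)
    {l₁ l₂ : Finset V} (hl₁ : l₁ ∈ Bl) (hl₂ : l₂ ∈ Bl)
    (hpl : p ∈ l₁) (hql : q ∈ l₁) (hrl : r ∈ l₂) (hsl : s ∈ l₂) :
    Q' = symmDiff l₁ l₂ \ Q := by
  have hpQ : p ∈ Q := by simp [hQeq]
  have hqQ : q ∈ Q := by simp [hQeq]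
  have hrQ : r ∈ Q := by simp [hQeq]
  have hsQ : s ∈ Q := by simp [hQeq]
  have hQsub : Q ⊆ symmDiff b₁ b₂ := hQQ' ▸ Finset.subset_union_left
  have hno_inter : ∀ v, v ∈ b₁ → v ∈ b₂ → v ∉ Q := by
    intro v hv1 hv2 hvQ
    have := hQsub hvQ
    rcases Finset.mem_symmDiff.1 this with ⟨-, h⟩ | ⟨-, h⟩
    · exact h hv2
    · exact h hv1
  have hb₁Qeq : b₁ ∩ Q = {p, q} := by
    apply (Finset.eq_of_subset_of_card_le ?_ ?_).symm
    · intro v hv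
      rcases Finset.mem_insert.1 hv with h | h
      · exact h ▸ Finset.mem_inter.2 ⟨hp, hpQ⟩
      · exact (Finset.mem_singleton.1 h) ▸ Finset.mem_inter.2 ⟨hq, hqQ⟩
    · rw [h1]
      rw [Finset.card_insert_of_notMem (by simp [hpq]), Finset.card_singleton]
  have hb₁eq : b₁ = l₁ := block_eq_block hBl hpair hb₁ hl₁ hpq hp hq hpl hql
  have hb₂Qeq : b₂ ∩ Q = {r, s} := by
    have hsub : b₂ ∩ Q ⊆ {r, s} := by
      intro v hv
      obtain ⟨hv2, hvQ⟩ := Finset.mem_inter.1 hv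
      have hvb1 : v ∉ b₁ := fun hvb1 => hno_inter v hvb1 hv2 hvQ
      simp only [hQeq, Finset.mem_insert, Finset.mem_singleton] at hvQ
      rcases hvQ with h | h | h | h
      · exact absurd (h ▸ hp) hvb1
      · exact absurd (h ▸ hq) hvb1
      · simp [h]
      · simp [h]
    apply Finset.eq_of_subset_of_card_le hsub
    rw [h2]
    rw [Finset.card_insert_of_notMem (by simp [hrs]), Finset.card_singleton]
  have hr2 : r ∈ b₂ := by
    have : r ∈ b₂ ∩ Q := hb₂Qeq ▸ (by simp : r ∈ ({r, s} : Finset V))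
    exact (Finset.mem_inter.1 this).1
  have hs2 : s ∈ b₂ := by
    have : s ∈ b₂ ∩ Q := hb₂Qeq ▸ (by simp : s ∈ ({r, s} : Finset V))
    exact (Finset.mem_inter.1 this).1
  have hb₂eq : b₂ = l₂ := block_eq_block hBl hpair hb₂ hl₂ hrs hr2 hs2 hrl hsl
  rw [hQ'eq, hb₁eq, hb₂eq]

/-- Distinct pairings give distinct quadrangles. -/
lemma distinct_pairings (hcard : X.card = 21)
    (hBl : ∀ b ∈ Bl, b ⊆ X ∧ b.card = 5 ∧ (∑ v ∈ b, v) = 0)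
    (hpair : ∀ x ∈ X, ∀ y ∈ X, x ≠ y → ∃! b, b ∈ Bl ∧ x ∈ b ∧ y ∈ b)
    {Q : Finset V} (hQ : IsXQuadrangle X Bl Q)
    {x y u w : V} (hxy : x ≠ y) (hxu : x ≠ u) (hxw : x ≠ w) (hyu : y ≠ u)
    (hyw : y ≠ w) (huw : u ≠ w) (hQeq : Q = {x, y, u, w})
    {p₁ p₂ q₁ q₂ : Finset V} (hp₁ : p₁ ∈ Bl) (hp₂ : p₂ ∈ Bl) (hq₁ : q₁ ∈ Bl) (hq₂ : q₂ ∈ Bl)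
    (hxp : x ∈ p₁) (hyp : y ∈ p₁) (hup : u ∈ p₂) (hwp : w ∈ p₂)
    (hxq : x ∈ q₁) (huq : u ∈ q₁) (hyq : y ∈ q₂) (hwq : w ∈ q₂) :
    symmDiff p₁ p₂ \ Q ≠ symmDiff q₁ q₂ \ Q := by
  have hQeq2 : Q = {x, u, y, w} := by
    rw [hQeq]; ext v; simp only [Finset.mem_insert, Finset.mem_singleton]; tauto
  obtain ⟨-, -, -, hp₁Q, hp₂Q, hQsubp⟩ :=
    construct hcard hBl hpair hQ hxy hxu hxw hyu hyw huw hQeq hp₁ hp₂ hxp hyp hup hwp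
  obtain ⟨-, -, -, hq₁Q, hq₂Q, hQsubq⟩ :=
    construct hcard hBl hpair hQ hxu hxy hxw (Ne.symm hyu) huw hyw hQeq2 hq₁ hq₂ hxq huq hyq hwq
  intro heq
  have hsd_eq : symmDiff p₁ p₂ = symmDiff q₁ q₂ := by
    have h1 : Q ∪ (symmDiff p₁ p₂ \ Q) = symmDiff p₁ p₂ := Finset.union_sdiff_of_subset hQsubp
    have h2 : Q ∪ (symmDiff q₁ q₂ \ Q) = symmDiff q₁ q₂ := Finset.union_sdiff_of_subset hQsubq
    rw [← h1, ← h2, heq]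
  have hp12 : p₁ ≠ p₂ := by
    intro h
    have : u ∈ p₁ ∩ Q := Finset.mem_inter.2 ⟨h ▸ hup, by simp [hQeq]⟩
    rw [hp₁Q] at this
    simp only [Finset.mem_insert, Finset.mem_singleton] at this
    rcases this with h' | h' <;> [exact hxu h'.symm; exact hyu h'.symm]
  obtain ⟨z, hz⟩ := blocks_meet hcard hBl hpair hp₁ hp₂ hp12
  have herase_sub : p₁.erase z ⊆ symmDiff p₁ p₂ := by
    intro v hv
    obtain ⟨hvz, hv1⟩ := Finset.mem_erase.1 hv
    rw [Finset.mem_symmDiff]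
    left
    refine ⟨hv1, fun hv2 => hvz ?_⟩
    have : v ∈ p₁ ∩ p₂ := Finset.mem_inter.2 ⟨hv1, hv2⟩
    rw [hz, Finset.mem_singleton] at this
    exact this
  have hp1q1 : ∀ v, v ∈ p₁ → v ∈ q₁ → v = x := by
    intro v hv1 hv2
    by_contra hvx
    have hpq : p₁ = q₁ := block_eq_block hBl hpair hp₁ hq₁ (Ne.symm hvx) hxp hv1 hxq hv2
    have : u ∈ p₁ ∩ Q := Finset.mem_inter.2 ⟨hpq ▸ huq, by simp [hQeq]⟩
    rw [hp₁Q] at this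
    simp only [Finset.mem_insert, Finset.mem_singleton] at this
    rcases this with h' | h' <;> [exact hxu h'.symm; exact hyu h'.symm]
  have hp1q2 : ∀ v, v ∈ p₁ → v ∈ q₂ → v = y := by
    intro v hv1 hv2
    by_contra hvy
    have hpq : p₁ = q₂ := block_eq_block hBl hpair hp₁ hq₂ (Ne.symm hvy) hyp hv1 hyq hv2
    have : w ∈ p₁ ∩ Q := Finset.mem_inter.2 ⟨hpq ▸ hwq, by simp [hQeq]⟩
    rw [hp₁Q] at this
    simp only [Finset.mem_insert, Finset.mem_singleton] at this
    rcases this with h' | h' <;> [exact hxw h'.symm; exact hyw h'.symm]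
  have hsub_xy : p₁.erase z ⊆ {x, y} := by
    intro v hv
    have hv' : v ∈ symmDiff q₁ q₂ := hsd_eq ▸ herase_sub hv
    have hv1 : v ∈ p₁ := Finset.mem_of_mem_erase hv
    rcases Finset.mem_symmDiff.1 hv' with ⟨h, -⟩ | ⟨h, -⟩
    · simp [hp1q1 v hv1 h]
    · simp [hp1q2 v hv1 h]
  have hc1 : (p₁.erase z).card = 4 := by
    have hzp1 : z ∈ p₁ := by
      have : z ∈ p₁ ∩ p₂ := hz ▸ Finset.mem_singleton_self z
      exact (Finset.mem_inter.1 this).1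
    rw [Finset.card_erase_of_mem hzp1, (hBl p₁ hp₁).2.1]
  have := Finset.card_le_card hsub_xy
  rw [hc1] at this
  have hle : ({x, y} : Finset V).card ≤ 2 := Finset.card_insert_le _ _ |>.trans (by simp)
  omega

end Aux

set_option maxHeartbeats 2000000 in
/-- In the configuration `M¹⁰(F₂)`: if a point `p` is the center (sum) of an
`X`-quadrangle `Q`, then `p` is the center of exactly three other `X`-quadrangles, each
obtained from a pairing of `Q`: there are two distinct blocks, each meeting `Q` in two
points, such that the other quadrangle is the symmetric difference of the two blocks
minus `Q` (replacing the points of `Q` by the remaining points of the two blocks other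
than their intersection point). -/
theorem quadrangle_center_three_others
    (V : Type*) [AddCommGroup V] [Module (ZMod 2) V] [DecidableEq V]
    (X : Finset V) (hX0 : (0 : V) ∉ X) (hcard : X.card = 21)
    (Bl : Set (Finset V))
    (hBl : ∀ b ∈ Bl, b ⊆ X ∧ b.card = 5 ∧ (∑ v ∈ b, v) = 0)
    (hpair : ∀ x ∈ X, ∀ y ∈ X, x ≠ y → ∃! b, b ∈ Bl ∧ x ∈ b ∧ y ∈ b)
    (hno3 : ∀ x ∈ X, ∀ y ∈ X, x ≠ y → x + y ∉ X)
    (hno4 : ∀ s : Finset V, s ⊆ X → s.card = 4 →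
        LinearIndependent (ZMod 2) (fun x : (s : Set V) => (x : V)))
    (hzerosum : ∀ S : Finset V, S ⊆ X → 1 ≤ S.card → S.card ≤ 8 →
        (∑ v ∈ S, v) = 0 →
        (∃ b ∈ Bl, S = b) ∨ ∃ b₁ ∈ Bl, ∃ b₂ ∈ Bl, b₁ ≠ b₂ ∧ S = symmDiff b₁ b₂)
    (Q : Finset V) (hQ : IsXQuadrangle X Bl Q) :
    Set.ncard {Q' : Finset V | IsXQuadrangle X Bl Q' ∧
        (∑ v ∈ Q', v) = (∑ v ∈ Q, v) ∧ Q' ≠ Q} = 3 ∧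
    ∀ Q' : Finset V, IsXQuadrangle X Bl Q' → (∑ v ∈ Q', v) = (∑ v ∈ Q, v) → Q' ≠ Q →
      ∃ b₁ ∈ Bl, ∃ b₂ ∈ Bl, b₁ ≠ b₂ ∧ (b₁ ∩ Q).card = 2 ∧ (b₂ ∩ Q).card = 2 ∧
        Q' = symmDiff b₁ b₂ \ Q := by
  -- enumerate Q
  obtain ⟨a, t, hat, hQins, ht3⟩ := Finset.card_eq_succ.1 (by rw [hQ.2.1] : Q.card = 3 + 1)
  obtain ⟨b, c, d, hbc, hbd, hcd, rfl⟩ := Finset.card_eq_three.1 ht3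
  have hab : a ≠ b := fun h => hat (by simp [h])
  have hac : a ≠ c := fun h => hat (by simp [h])
  have had : a ≠ d := fun h => hat (by simp [h])
  have hQeq : Q = {a, b, c, d} := hQins.symm
  have haX : a ∈ X := hQ.1 (by simp [hQeq])
  have hbX : b ∈ X := hQ.1 (by simp [hQeq])
  have hcX : c ∈ X := hQ.1 (by simp [hQeq])
  have hdX : d ∈ X := hQ.1 (by simp [hQeq])
  -- the six blocks
  obtain ⟨lab, hlab, halab, hblab⟩ := (hpair a haX b hbX hab).exists
  obtain ⟨lcd, hlcd, hclcd, hdlcd⟩ := (hpair c hcX d hdX hcd).exists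
  obtain ⟨lac, hlac, halac, hclac⟩ := (hpair a haX c hcX hac).exists
  obtain ⟨lbd, hlbd, hblbd, hdlbd⟩ := (hpair b hbX d hdX hbd).exists
  obtain ⟨lad, hlad, halad, hdlad⟩ := (hpair a haX d hdX had).exists
  obtain ⟨lbc, hlbc, hblbc, hclbc⟩ := (hpair b hbX c hcX hbc).exists
  set D₁ := symmDiff lab lcd \ Q with hD₁
  set D₂ := symmDiff lac lbd \ Q with hD₂
  set D₃ := symmDiff lad lbc \ Q with hD₃
  -- alternative enumerations of Q
  have hQeq2 : Q = {a, c, b, d} := by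
    rw [hQeq]; ext v; simp only [Finset.mem_insert, Finset.mem_singleton]; tauto
  have hQeq3 : Q = {a, b, d, c} := by
    rw [hQeq]; ext v; simp only [Finset.mem_insert, Finset.mem_singleton]; tauto
  have hQeq4 : Q = {a, c, d, b} := by
    rw [hQeq]; ext v; simp only [Finset.mem_insert, Finset.mem_singleton]; tauto
  have hQeq5 : Q = {a, d, b, c} := by
    rw [hQeq]; ext v; simp only [Finset.mem_insert, Finset.mem_singleton]; tauto
  -- the three constructions
  have hC₁ := construct hcard hBl hpair hQ hab hac had hbc hbd hcd hQeq hlab hlcd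
    halab hblab hclcd hdlcd
  have hC₂ := construct hcard hBl hpair hQ hac hab had (Ne.symm hbc) hcd hbd hQeq2 hlac hlbd
    halac hclac hblbd hdlbd
  have hC₃ := construct hcard hBl hpair hQ had hab hac (Ne.symm hbd) (Ne.symm hcd) hbc hQeq5
    hlad hlbc halad hdlad hblbc hclbc
  -- distinctness
  have hd12 : D₁ ≠ D₂ :=
    distinct_pairings hcard hBl hpair hQ hab hac had hbc hbd hcd hQeq hlab hlcd hlac hlbd
      halab hblab hclcd hdlcd halac hclac hblbd hdlbd
  have hd13 : D₁ ≠ D₃ :=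
    distinct_pairings hcard hBl hpair hQ hab had hac hbd hbc (Ne.symm hcd) hQeq3 hlab hlcd
      hlad hlbc halab hblab hdlcd hclcd halad hdlad hblbc hclbc
  have hd23 : D₂ ≠ D₃ :=
    distinct_pairings hcard hBl hpair hQ hac had hab hcd (Ne.symm hbc) (Ne.symm hbd)
      hQeq4 hlac hlbd hlad hlbc halac hclac hdlbd hblbd halad hdlad hclbc hblbc
  -- membership direction: each Dᵢ belongs to the set
  have hmem : ∀ D : Finset V, IsXQuadrangle X Bl D → (∑ v ∈ D, v) = (∑ v ∈ Q, v) → D ≠ Q →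
      D ∈ {Q' : Finset V | IsXQuadrangle X Bl Q' ∧ (∑ v ∈ Q', v) = (∑ v ∈ Q, v) ∧ Q' ≠ Q} :=
    fun D h1 h2 h3 => ⟨h1, h2, h3⟩
  -- completeness
  have hcomplete : ∀ Q' : Finset V, IsXQuadrangle X Bl Q' → (∑ v ∈ Q', v) = (∑ v ∈ Q, v) →
      Q' ≠ Q → Q' = D₁ ∨ Q' = D₂ ∨ Q' = D₃ := by
    intro Q' hQ' hsum hne
    obtain ⟨b₁, hb₁, b₂, hb₂, hb12, hdisj, hunion, hc1, hc2, hQ'eq⟩ :=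
      classify hBl hpair hzerosum hQ hQ' hsum hne
    have main : ∀ c₁ c₂ : Finset V, c₁ ∈ Bl → c₂ ∈ Bl →
        Q ∪ Q' = symmDiff c₁ c₂ → (c₁ ∩ Q).card = 2 → (c₂ ∩ Q).card = 2 →
        Q' = symmDiff c₁ c₂ \ Q → a ∈ c₁ → Q' = D₁ ∨ Q' = D₂ ∨ Q' = D₃ := by
      intro c₁ c₂ hc₁ hc₂ hun h1 h2 hQ'e ha1
      -- find the second point of c₁ ∩ Q
      have haQ : a ∈ c₁ ∩ Q := Finset.mem_inter.2 ⟨ha1, by simp [hQeq]⟩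
      obtain ⟨t', ht', hta⟩ : ∃ t' ∈ c₁ ∩ Q, t' ≠ a := by
        obtain ⟨p, hp, q, hq, hpq⟩ := Finset.one_lt_card.1 (by rw [h1]; norm_num)
        by_cases hpa : p = a
        · exact ⟨q, hq, fun h => hpq (hpa ▸ h ▸ rfl)⟩
        · exact ⟨p, hp, hpa⟩
      obtain ⟨ht'c, ht'Q⟩ := Finset.mem_inter.1 ht'
      have ht'mem : t' = b ∨ t' = c ∨ t' = d := by
        simp only [hQeq, Finset.mem_insert, Finset.mem_singleton] at ht'Q
        tauto
      rcases ht'mem with rfl | rfl | rfl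
      · left
        rw [hD₁]
        exact identify hBl hpair hc₁ hc₂ hun h1 h2 hQ'e hab hac had hbc hbd hcd hQeq
          ha1 ht'c hlab hlcd halab hblab hclcd hdlcd
      · right; left
        rw [hD₂]
        exact identify hBl hpair hc₁ hc₂ hun h1 h2 hQ'e hac hab had (Ne.symm hbc) hcd hbd
          hQeq2 ha1 ht'c hlac hlbd halac hclac hblbd hdlbd
      · right; right
        rw [hD₃]
        exact identify hBl hpair hc₁ hc₂ hun h1 h2 hQ'e had hab hac (Ne.symm hbd)
          (Ne.symm hcd) hbc hQeq5 ha1 ht'c hlad hlbc halad hdlad hblbc hclbc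
    have haQQ' : a ∈ symmDiff b₁ b₂ := hunion ▸ Finset.mem_union_left _ (by simp [hQeq])
    rcases Finset.mem_symmDiff.1 haQQ' with ⟨h, -⟩ | ⟨h, -⟩
    · exact main b₁ b₂ hb₁ hb₂ hunion hc1 hc2 hQ'eq h
    · refine main b₂ b₁ hb₂ hb₁ ?_ hc2 hc1 ?_ h
      · rw [hunion, symmDiff_comm]
      · rw [hQ'eq, symmDiff_comm]
  have hseteq : {Q' : Finset V | IsXQuadrangle X Bl Q' ∧
      (∑ v ∈ Q', v) = (∑ v ∈ Q, v) ∧ Q' ≠ Q} = {D₁, D₂, D₃} := by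
    ext Q'
    simp only [Set.mem_setOf_eq, Set.mem_insert_iff, Set.mem_singleton_iff]
    constructor
    · rintro ⟨h1, h2, h3⟩
      exact hcomplete Q' h1 h2 h3
    · rintro (rfl | rfl | rfl)
      · exact ⟨hC₁.1, hC₁.2.1, hC₁.2.2.1⟩
      · exact ⟨hC₂.1, hC₂.2.1, hC₂.2.2.1⟩
      · exact ⟨hC₃.1, hC₃.2.1, hC₃.2.2.1⟩
  constructor
  · rw [hseteq]
    rw [Set.ncard_insert_of_notMem (by simp [hd12, hd13]) (Set.toFinite _),
      Set.ncard_pair hd23]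
  · intro Q' hQ' hsum hne
    obtain ⟨b₁, hb₁, b₂, hb₂, hb12, -, -, hc1, hc2, hQ'eq⟩ :=
      classify hBl hpair hzerosum hQ hQ' hsum hne
    exact ⟨b₁, hb₁, b₂, hb₂, hb12, hc1, hc2, hQ'eq⟩
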